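/- Let V be a finite ground set, f : 2^V → ℝ a monotone, nonnegative, submodular set function, c a cost function on V, K > 0 a real number, and α ≥ 1 an integer. If S ⊆ V satisfies c(e) ≤ K for every e ∈ S and c(S) ≤ αK, then there exists T ⊆ S with c(T) ≤ K and f(T) ≥ f(S)/(2α − 1). -/

import Mathlib

private lemma submod_diff {V : Type*} [DecidableEq V]
    (f : Finset V → ℝ)
    (hsub : ∀ S T : Finset V, S ⊆ T → ∀ e : V,
      f (S ∪ {e}) - f S ≥ f (T ∪ {e}) - f T) :
    ∀ B C D : Finset V, C ⊆ D → f (D ∪ B) - f D ≤ f (C ∪ B) - f C := by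
  intro B
  induction B using Finset.induction_on with
  | empty => intro C D h; simp
  | insert _ _ he =>
    rename_i e B ih
    intro C D hCD
    have h1 := ih (C ∪ {e}) (D ∪ {e}) (Finset.union_subset_union_left hCD)
    have h2 := hsub C D hCD e
    have hD : D ∪ insert e B = (D ∪ {e}) ∪ B := by
      rw [Finset.insert_eq, ← Finset.union_assoc]
    have hC : C ∪ insert e B = (C ∪ {e}) ∪ B := by
      rw [Finset.insert_eq, ← Finset.union_assoc]
    rw [hD, hC]
    linarith

private lemma subadd {V : Type*} [DecidableEq V]
    (f : Finset V → ℝ)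
    (hnonneg : ∀ S : Finset V, 0 ≤ f S)
    (hsub : ∀ S T : Finset V, S ⊆ T → ∀ e : V,
      f (S ∪ {e}) - f S ≥ f (T ∪ {e}) - f T)
    (A B : Finset V) : f (A ∪ B) ≤ f A + f B := by
  have h := submod_diff f hsub B ∅ A (Finset.empty_subset A)
  simp at h
  have := hnonneg ∅
  linarith

private lemma key {V : Type*} [DecidableEq V]
    (f : Finset V → ℝ)
    (hmono : ∀ S T : Finset V, S ⊆ T → f S ≤ f T)
    (hnonneg : ∀ S : Finset V, 0 ≤ f S)
    (hsub : ∀ S T : Finset V, S ⊆ T → ∀ e : V,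
      f (S ∪ {e}) - f S ≥ f (T ∪ {e}) - f T)
    (c : V → ℝ) (hc : ∀ e, 0 < c e)
    (K : ℝ) (hK : 0 < K) :
    ∀ α : ℕ, 1 ≤ α → ∀ S : Finset V, (∀ e ∈ S, c e ≤ K) →
      (∑ e ∈ S, c e ≤ (α : ℝ) * K) →
      ∃ T ⊆ S, ∑ e ∈ T, c e ≤ K ∧ f S ≤ (2 * (α : ℝ) - 1) * f T := by
  intro α hα
  induction α, hα using Nat.le_induction with
  | base =>
    intro S hitem hcost
    refine ⟨S, Finset.Subset.refl S, by simpa using hcost, by norm_num⟩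
  | succ n hn ih =>
    intro S hitem hcost
    classical
    have hn1 : (1 : ℝ) ≤ (n : ℝ) := by exact_mod_cast hn
    by_cases hle : ∑ e ∈ S, c e ≤ (n : ℝ) * K
    · obtain ⟨T, hTS, hTc, hTf⟩ := ih S hitem hle
      refine ⟨T, hTS, hTc, ?_⟩
      have := hnonneg T
      push_cast
      nlinarith
    · push_neg at hle
      set cS := ∑ e ∈ S, c e with hcS
      have hne : (S.powerset.filter (fun T => cS - (n : ℝ) * K ≤ ∑ e ∈ T, c e)).Nonempty := by
        refine ⟨S, ?_⟩
        simp only [Finset.mem_filter, Finset.mem_powerset]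
        constructor
        · exact Finset.Subset.refl S
        · nlinarith
      obtain ⟨T, hTmem, hTmin⟩ := Finset.exists_min_image _ (fun T => T.card) hne
      simp only [Finset.mem_filter, Finset.mem_powerset] at hTmem
      obtain ⟨hTS, hTc⟩ := hTmem
      have hTne : T.Nonempty := by
        rcases Finset.eq_empty_or_nonempty T with h | h
        · exfalso
          rw [h] at hTc
          simp at hTc
          nlinarith
        · exact h
      obtain ⟨e₀, he₀⟩ := hTne
      have herase : ∑ e ∈ T.erase e₀, c e < cS - (n : ℝ) * K := by
        by_contra h
        push_neg at h
        have hmem : T.erase e₀ ∈ S.powerset.filter (fun T => cS - (n : ℝ) * K ≤ ∑ e ∈ T, c e) := by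
          simp only [Finset.mem_filter, Finset.mem_powerset]
          exact ⟨(Finset.erase_subset e₀ T).trans hTS, h⟩
        have := hTmin _ hmem
        have hcard : (T.erase e₀).card < T.card := Finset.card_erase_lt_of_mem he₀
        omega
      -- costs
      have hsum_erase : ∑ e ∈ T.erase e₀, c e + c e₀ = ∑ e ∈ T, c e :=
        Finset.sum_erase_add T c he₀
      have hcS_le : cS ≤ ((n : ℝ) + 1) * K := by
        have : ((n + 1 : ℕ) : ℝ) = (n : ℝ) + 1 := by push_cast; ring
        rw [← this]; exact hcost
      have hT2cost : ∑ e ∈ T.erase e₀, c e ≤ K := by nlinarith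
      have hRcost : ∑ e ∈ S \ T, c e ≤ (n : ℝ) * K := by
        have hsplit : ∑ e ∈ S \ T, c e + ∑ e ∈ T, c e = cS :=
          Finset.sum_sdiff hTS
        linarith
      have hitemR : ∀ e ∈ S \ T, c e ≤ K := fun e he =>
        hitem e (Finset.sdiff_subset he)
      obtain ⟨T₃, hT₃R, hT₃c, hT₃f⟩ := ih (S \ T) hitemR hRcost
      -- subadditivity chain
      have hST : S = T ∪ (S \ T) := (Finset.union_sdiff_of_subset hTS).symm
      have h1 : f S ≤ f T + f (S \ T) := by
        have h := subadd f hnonneg hsub T (S \ T)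
        rwa [Finset.union_sdiff_of_subset hTS] at h
      have hTsplit : T = {e₀} ∪ T.erase e₀ := by
        rw [← Finset.insert_eq]
        exact (Finset.insert_erase he₀).symm
      have h2 : f T ≤ f {e₀} + f (T.erase e₀) := by
        have h := subadd f hnonneg hsub {e₀} (T.erase e₀)
        rwa [← Finset.insert_eq, Finset.insert_erase he₀] at h
      have hfS : f S ≤ f {e₀} + f (T.erase e₀) + (2 * (n : ℝ) - 1) * f T₃ := by
        linarith
      have hA := hnonneg {e₀}
      have hB := hnonneg (T.erase e₀)
      have hC := hnonneg T₃
      have hgoalcast : (2 * ((n : ℝ) + 1) - 1) = 2 * (n : ℝ) + 1 := by ring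
      have hcastn : ((n + 1 : ℕ) : ℝ) = (n : ℝ) + 1 := by push_cast; ring
      -- pick best of the three
      rcases le_total (f {e₀}) (f (T.erase e₀)) with h12 | h12
      · rcases le_total (f (T.erase e₀)) (f T₃) with h23 | h23
        · refine ⟨T₃, hT₃R.trans Finset.sdiff_subset, hT₃c, ?_⟩
          rw [hcastn, hgoalcast]; nlinarith
        · refine ⟨T.erase e₀, (Finset.erase_subset e₀ T).trans hTS, hT2cost, ?_⟩
          rw [hcastn, hgoalcast]; nlinarith
      · rcases le_total (f {e₀}) (f T₃) with h13 | h13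
        · refine ⟨T₃, hT₃R.trans Finset.sdiff_subset, hT₃c, ?_⟩
          rw [hcastn, hgoalcast]; nlinarith
        · refine ⟨{e₀}, Finset.singleton_subset_iff.mpr (hTS he₀), by
            simpa using hitem e₀ (hTS he₀), ?_⟩
          rw [hcastn, hgoalcast]; nlinarith

/-- If `f` is monotone, nonnegative and submodular, every element of `S` has
cost at most `K`, and the total cost of `S` is at most `α·K` (with `α ≥ 1` an integer),
then there exists `T ⊆ S` with cost at most `K` and `f(T) ≥ f(S) / (2α − 1)`. -/
theorem exists_low_cost_subset_with_large_value {V : Type*} [DecidableEq V] [Fintype V]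
    (f : Finset V → ℝ)
    (hmono : ∀ S T : Finset V, S ⊆ T → f S ≤ f T)
    (hnonneg : ∀ S : Finset V, 0 ≤ f S)
    (hsub : ∀ S T : Finset V, S ⊆ T → ∀ e : V,
      f (S ∪ {e}) - f S ≥ f (T ∪ {e}) - f T)
    (c : V → ℝ) (hc : ∀ e, 0 < c e)
    (K : ℝ) (hK : 0 < K) (α : ℕ) (hα : 1 ≤ α)
    (S : Finset V)
    (hitem : ∀ e ∈ S, c e ≤ K)
    (hcost : ∑ e ∈ S, c e ≤ (α : ℝ) * K) :
    ∃ T ⊆ S, ∑ e ∈ T, c e ≤ K ∧ f T ≥ f S / (2 * (α : ℝ) - 1) := by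
  obtain ⟨T, hTS, hTc, hTf⟩ := key f hmono hnonneg hsub c hc K hK α hα S hitem hcost
  refine ⟨T, hTS, hTc, ?_⟩
  have hpos : (0 : ℝ) < 2 * (α : ℝ) - 1 := by
    have : (1 : ℝ) ≤ (α : ℝ) := by exact_mod_cast hα
    linarith
  rw [ge_iff_le, div_le_iff₀ hpos]
  linarith [hTf]
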